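/- Let G = ([n], E) be a directed graph and S_G ≤ M(n, ℂ) its graphical matrix space. The maximum number of vertices of an acyclic induced subgraph of G equals the largest dimension of a subspace U ≤ ℂ^n such that the induced matrix space S_G[U] = { T_U B T_U* : B ∈ S_G } is nil, where T_U is a matrix whose rows form an orthonormal basis of U. -/

import Mathlib

open Matrix

/-- The graphical matrix space of a directed graph with arc set `E ⊆ [n] × [n]`. -/
def graphSpace (F : Type*) [Field F] {n : ℕ} (E : Finset (Fin n × Fin n)) :
    Submodule F (Matrix (Fin n) (Fin n) F) :=
  Submodule.span F ((fun e => Matrix.single e.1 e.2 (1 : F)) '' (E : Set (Fin n × Fin n)))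

/-- The induced subgraph on the vertex set `V` has a cycle. -/
def HasCycleIn {n : ℕ} (E : Finset (Fin n × Fin n)) (V : Finset (Fin n)) : Prop :=
  ∃ (k : ℕ) (v : ℕ → Fin n), 0 < k ∧ v k = v 0 ∧
    (∀ i < k, v i ∈ V) ∧ (∀ i < k, (v i, v (i + 1)) ∈ E) ∧
    (∀ i < k, ∀ j < k, v i = v j → i = j)

/-- Any element of the graphical matrix space is supported on `E`. -/
lemma graphSpace_support {n : ℕ} (E : Finset (Fin n × Fin n))
    {B : Matrix (Fin n) (Fin n) ℂ} (hB : B ∈ graphSpace ℂ E) :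
    ∀ i j, B i j ≠ 0 → (i, j) ∈ E := by
  have key : ∀ i j, (i, j) ∉ E → B i j = 0 := by
    intro i j hij
    induction hB using Submodule.span_induction with
    | mem x hx =>
      obtain ⟨e, he, rfl⟩ := hx
      simp only [Matrix.single, Matrix.of_apply, ite_eq_right_iff, and_imp]
      rintro rfl rfl
      exact absurd he hij
    | zero => simp
    | add x y hx hy ihx ihy => simp [Matrix.add_apply, ihx, ihy]
    | smul a x hx ihx => simp [Matrix.smul_apply, ihx]
  intro i j h
  by_contra hE
  exact h (key i j hE)

/-- A walk in `V` along `E` that revisits a vertex yields a cycle. -/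
lemma hasCycleIn_of_walk {n : ℕ} (E : Finset (Fin n × Fin n)) (V : Finset (Fin n)) :
    ∀ L p q (w : ℕ → Fin n), q - p = L → p < q → w p = w q →
    (∀ i, p ≤ i → i < q → w i ∈ V) →
    (∀ i, p ≤ i → i < q → (w i, w (i + 1)) ∈ E) →
    HasCycleIn E V := by
  intro L
  induction L using Nat.strong_induction_on with
  | _ L ih =>
    intro p q w hL hpq hw hV hE
    by_cases hinj : ∀ i, p ≤ i → i < q → ∀ j, p ≤ j → j < q → w i = w j → i = j
    · refine ⟨q - p, fun i => w (p + i), by omega, ?_, ?_, ?_, ?_⟩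
      · show w (p + (q - p)) = w (p + 0)
        have h1 : p + (q - p) = q := by omega
        rw [h1, Nat.add_zero, hw]
      · intro i hi
        exact hV _ (by omega) (by omega)
      · intro i hi
        show (w (p + i), w (p + (i + 1))) ∈ E
        have h2 : p + (i + 1) = p + i + 1 := by omega
        rw [h2]
        exact hE (p + i) (by omega) (by omega)
      · intro i hi j hj hww
        have := hinj (p + i) (by omega) (by omega) (p + j) (by omega) (by omega) hww
        omega
    · push_neg at hinj
      obtain ⟨i, hpi, hiq, j, hpj, hjq, hij, hne⟩ := hinj
      rcases Nat.lt_or_ge i j with h | h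
      · exact ih (j - i) (by omega) i j w rfl (by omega) hij
          (fun t h1 h2 => hV t (by omega) (by omega))
          (fun t h1 h2 => hE t (by omega) (by omega))
      · have hji : j < i := by omega
        exact ih (i - j) (by omega) j i w rfl (by omega) hij.symm
          (fun t h1 h2 => hV t (by omega) (by omega))
          (fun t h1 h2 => hE t (by omega) (by omega))

/-- Nonzero entries of powers come from walks. -/
lemma pow_walk {k : ℕ} (M : Matrix (Fin k) (Fin k) ℂ) :
    ∀ m (a b : Fin k), (M ^ m) a b ≠ 0 →
      ∃ w : ℕ → Fin k, w 0 = a ∧ w m = b ∧ ∀ i < m, M (w i) (w (i + 1)) ≠ 0 := by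
  intro m
  induction m with
  | zero =>
    intro a b h
    have hab : a = b := by
      by_contra hab
      rw [pow_zero, Matrix.one_apply_ne hab] at h
      exact h rfl
    exact ⟨fun _ => a, rfl, hab, by omega⟩
  | succ m ih =>
    intro a b h
    rw [pow_succ] at h
    obtain ⟨c, hc⟩ : ∃ c, (M ^ m) a c * M c b ≠ 0 := by
      by_contra hC
      push_neg at hC
      apply h
      rw [Matrix.mul_apply]
      exact Finset.sum_eq_zero fun c _ => hC c
    have h1 : (M ^ m) a c ≠ 0 := fun hz => hc (by rw [hz, zero_mul])
    have h2 : M c b ≠ 0 := fun hz => hc (by rw [hz, mul_zero])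
    obtain ⟨w, hw0, hwm, hwe⟩ := ih a c h1
    refine ⟨fun i => if i ≤ m then w i else b, by simpa using hw0, by simp, ?_⟩
    intro i hi
    rcases Nat.lt_or_ge i m with h' | h'
    · have e1 : i ≤ m := by omega
      have e2 : i + 1 ≤ m := by omega
      simpa [e1, e2] using hwe i h'
    · have hi' : i = m := by omega
      subst hi'
      have e1 : i ≤ i := le_refl i
      have e2 : ¬ (i + 1 ≤ i) := by omega
      simpa [e1, e2, hwm] using h2

/-- A matrix supported on an acyclic induced subgraph is nilpotent. -/
lemma isNilpotent_of_acyclic {n k : ℕ} (E : Finset (Fin n × Fin n)) (V : Finset (Fin n))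
    (hnc : ¬ HasCycleIn E V) (f : Fin k → Fin n) (hfV : ∀ s, f s ∈ V)
    (M : Matrix (Fin k) (Fin k) ℂ) (hM : ∀ s t, M s t ≠ 0 → (f s, f t) ∈ E) :
    IsNilpotent M := by
  refine ⟨k, ?_⟩
  ext a b
  rw [Matrix.zero_apply]
  by_contra h
  obtain ⟨w, hw0, hwk, hwe⟩ := pow_walk M k a b h
  obtain ⟨x, y, hxy, hwxy⟩ := Fintype.exists_ne_map_eq_of_card_lt
    (fun i : Fin (k + 1) => w i) (by simp)
  have hcases : (x : ℕ) < y ∨ (y : ℕ) < x := by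
    rcases lt_or_gt_of_ne (fun hh : (x : ℕ) = (y : ℕ) => hxy (Fin.ext hh)) with h' | h'
    · exact Or.inl h'
    · exact Or.inr h'
  apply hnc
  rcases hcases with h' | h'
  · exact hasCycleIn_of_walk E V ((y : ℕ) - x) x y (fun i => f (w i)) rfl h'
      (congrArg f hwxy)
      (fun i _ _ => hfV (w i))
      (fun i h1 h2 => hM (w i) (w (i + 1)) (hwe i (by omega)))
  · exact hasCycleIn_of_walk E V ((x : ℕ) - y) y x (fun i => f (w i)) rfl h'
      (congrArg f hwxy.symm)
      (fun i _ _ => hfV (w i))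
      (fun i h1 h2 => hM (w i) (w (i + 1)) (hwe i (by omega)))

/-- Swapping the factors preserves nilpotency. -/
lemma isNilpotent_swap {d k : ℕ} (X : Matrix (Fin d) (Fin k) ℂ) (Y : Matrix (Fin k) (Fin d) ℂ)
    (h : IsNilpotent (X * Y)) : IsNilpotent (Y * X) := by
  obtain ⟨m, hm⟩ := h
  refine ⟨m + 1, ?_⟩
  have key : ∀ j, (Y * X) ^ (j + 1) = Y * (X * Y) ^ j * X := by
    intro j
    induction j with
    | zero => simp [pow_succ]
    | succ j ihj =>
      rw [pow_succ, ihj, pow_succ]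
      simp only [Matrix.mul_assoc]
  rw [key, hm]
  simp

/-- An acyclic induced subgraph gives a nil induced matrix space. -/
lemma left_to_right {n : ℕ} (E : Finset (Fin n × Fin n)) {k : ℕ} (V : Finset (Fin n))
    (hnc : ¬ HasCycleIn E V) (hcard : V.card = k) :
    ∃ T : Matrix (Fin k) (Fin n) ℂ, T * Tᴴ = 1 ∧
      ∀ B ∈ graphSpace ℂ E, IsNilpotent (T * B * Tᴴ) := by
  let f : Fin k ↪o Fin n := V.orderEmbOfFin hcard
  have hfV : ∀ s, f s ∈ V := fun s => V.orderEmbOfFin_mem hcard s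
  set T : Matrix (Fin k) (Fin n) ℂ := Matrix.of (fun s j => if f s = j then 1 else 0) with hT
  have hTB : ∀ B : Matrix (Fin n) (Fin n) ℂ, T * B * Tᴴ =
      Matrix.of (fun s t => B (f s) (f t)) := by
    intro B
    ext s t
    simp only [Matrix.mul_apply, Matrix.conjTranspose_apply, hT, Matrix.of_apply]
    have : ∀ b : Fin n,
        (∑ j : Fin n, (if f s = j then (1 : ℂ) else 0) * B j b) = B (f s) b := by
      intro b
      rw [Finset.sum_eq_single (f s)]
      · simp
      · intro j _ hj; simp [Ne.symm hj]
      · simp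
    simp only [this]
    rw [Finset.sum_eq_single (f t)]
    · simp
    · intro j _ hj; simp [Ne.symm hj]
    · simp
  refine ⟨T, ?_, ?_⟩
  · ext s t
    simp only [Matrix.mul_apply, Matrix.conjTranspose_apply, hT, Matrix.of_apply]
    rw [Finset.sum_eq_single (f s)]
    · by_cases hst : s = t
      · subst hst; simp
      · have hne : f s ≠ f t := fun hh => hst (f.injective hh)
        simp [Matrix.one_apply, hst, hne, Ne.symm hst, Ne.symm hne]
    · intro j _ hj; simp [Ne.symm hj]
    · simp
  · intro B hB
    rw [hTB B]
    exact isNilpotent_of_acyclic E V hnc f hfV _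
      (fun s t h => graphSpace_support E hB (f s) (f t) h)

/-- A nil induced matrix space gives an acyclic induced subgraph. -/
lemma right_to_left {n : ℕ} (E : Finset (Fin n × Fin n)) {d : ℕ}
    (T : Matrix (Fin d) (Fin n) ℂ) (hT : T * Tᴴ = 1)
    (hnil : ∀ B ∈ graphSpace ℂ E, IsNilpotent (T * B * Tᴴ)) :
    ∃ V : Finset (Fin n), ¬ HasCycleIn E V ∧ V.card = d := by
  classical
  set col : Fin n → (Fin d → ℂ) := fun j a => T a j with hcol
  -- columns of T span ℂ^d
  have hspan : Submodule.span ℂ (Set.range col) = ⊤ := by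
    rw [eq_top_iff]
    intro y _
    have hy : y = ∑ j : Fin n, (Tᴴ.mulVec y j) • col j := by
      funext a
      have h1 : T.mulVec (Tᴴ.mulVec y) = y := by
        rw [Matrix.mulVec_mulVec, hT, Matrix.one_mulVec]
      have := congrFun h1 a
      rw [← this]
      simp only [Matrix.mulVec, dotProduct, Finset.sum_apply, Pi.smul_apply,
        smul_eq_mul, hcol]
      exact Finset.sum_congr rfl fun j _ => mul_comm _ _
    rw [hy]
    exact Submodule.sum_mem _ fun j _ =>
      Submodule.smul_mem _ _ (Submodule.subset_span ⟨j, rfl⟩)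
  obtain ⟨b, hbsub, hbspan, hbli⟩ := exists_linearIndependent ℂ (Set.range col)
  rw [hspan] at hbspan
  have hbfin : b.Finite := hbli.setFinite
  haveI : Fintype b := hbfin.fintype
  have hbcard : Fintype.card b = d := by
    have hbasis : Module.Basis b ℂ (Fin d → ℂ) := Module.Basis.mk hbli (by rw [Subtype.range_coe, hbspan])
    have := Module.finrank_eq_card_basis hbasis
    simpa using this.symm
  have e : Fin d ≃ b := (Fintype.equivFinOfCardEq hbcard).symm
  have hchoice : ∀ s : Fin d, ∃ j : Fin n, col j = (e s : Fin d → ℂ) :=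
    fun s => hbsub (e s).2
  choose f hf using hchoice
  have hli : LinearIndependent ℂ (fun s : Fin d => col (f s)) := by
    have : (fun s : Fin d => col (f s)) = (fun x : b => (x : Fin d → ℂ)) ∘ e := by
      funext s; exact hf s
    rw [this]
    exact hbli.comp e e.injective
  have hfinj : Function.Injective f := by
    intro s t hst
    have : col (f s) = col (f t) := by rw [hst]
    exact hli.injective this
  refine ⟨Finset.image f Finset.univ, ?_, ?_⟩
  swap
  · rw [Finset.card_image_of_injective _ hfinj, Finset.card_univ, Fintype.card_fin]
  rintro ⟨k, v, hk, hvk, hvV, hvE, hvinj⟩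
  haveI : NeZero k := ⟨hk.ne'⟩
  -- choose preimages of cycle vertices
  have hgex : ∀ s : Fin k, ∃ t : Fin d, f t = v s := by
    intro s
    have := hvV s s.isLt
    rw [Finset.mem_image] at this
    obtain ⟨t, _, ht⟩ := this
    exact ⟨t, ht⟩
  choose g hg using hgex
  have hginj : Function.Injective g := by
    intro s t hst
    have : v (s : ℕ) = v (t : ℕ) := by rw [← hg s, ← hg t, hst]
    exact Fin.ext (hvinj s s.isLt t t.isLt this)
  set K : Matrix (Fin d) (Fin k) ℂ := Matrix.of (fun a s => T a (v s)) with hK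
  have hliK : LinearIndependent ℂ (fun s : Fin k => col (v (s : ℕ))) := by
    have : (fun s : Fin k => col (v (s : ℕ))) = (fun t : Fin d => col (f t)) ∘ g := by
      funext s; simp [hg s]
    rw [this]
    exact hli.comp g hginj
  -- det (Kᴴ * K) ≠ 0
  have hdetA : (Kᴴ * K).det ≠ 0 := by
    intro hdet
    obtain ⟨x, hx0, hx⟩ := (Matrix.exists_mulVec_eq_zero_iff).2 hdet
    have hKx : K.mulVec x = 0 := by
      have hdp : dotProduct (star (K.mulVec x)) (K.mulVec x) = 0 := by
        rw [Matrix.star_mulVec, ← Matrix.dotProduct_mulVec, Matrix.mulVec_mulVec, hx,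
          dotProduct_zero]
      open ComplexOrder in
      exact dotProduct_star_self_eq_zero.mp hdp
    apply hx0
    have hsum : (∑ s : Fin k, x s • col (v (s : ℕ))) = 0 := by
      funext a
      have := congrFun hKx a
      simp only [Matrix.mulVec, dotProduct, hK, Matrix.of_apply, Pi.zero_apply] at this
      simp only [Finset.sum_apply, Pi.smul_apply, smul_eq_mul, Pi.zero_apply, hcol]
      rw [← this]
      exact Finset.sum_congr rfl fun s _ => mul_comm _ _
    have := Fintype.linearIndependent_iff.mp hliK x hsum
    funext s
    exact this s
  -- the cycle matrix B
  set R : Matrix (Fin n) (Fin k) ℂ :=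
    Matrix.of (fun a s => if a = v (s : ℕ) then 1 else 0) with hR
  set L : Matrix (Fin k) (Fin n) ℂ :=
    Matrix.of (fun s a => if a = v ((s : ℕ) + 1) then 1 else 0) with hL
  have hBmem : R * L ∈ graphSpace ℂ E := by
    have hBeq : R * L = ∑ s : Fin k,
        Matrix.single (v (s : ℕ)) (v ((s : ℕ) + 1)) (1 : ℂ) := by
      ext a c
      simp only [Matrix.mul_apply, hR, hL, Matrix.of_apply, Finset.sum_apply,
        Matrix.single, Matrix.sum_apply]
      refine Finset.sum_congr rfl fun s _ => ?_
      by_cases h1 : a = v (s : ℕ) <;> by_cases h2 : c = v ((s : ℕ) + 1) <;>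
        simp [h1, h2, eq_comm]
    rw [hBeq]
    exact Submodule.sum_mem _ fun s _ => Submodule.subset_span
      ⟨(v (s : ℕ), v ((s : ℕ) + 1)), by simpa using hvE s s.isLt, rfl⟩
  have hN : IsNilpotent ((L * Tᴴ) * (T * R)) := by
    apply isNilpotent_swap
    have : (T * R) * (L * Tᴴ) = T * (R * L) * Tᴴ := by
      simp only [Matrix.mul_assoc]
    rw [this]
    exact hnil _ hBmem
  -- identify (L * Tᴴ) * (T * R) with a row-permuted Kᴴ * K
  have key : ∀ s : Fin k, v (((s + 1 : Fin k)) : ℕ) = v ((s : ℕ) + 1) := by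
    intro s
    have hval : ((s + 1 : Fin k) : ℕ) = ((s : ℕ) + 1) % k := by
      rw [Fin.val_add, Fin.val_one', Nat.add_mod ((s : ℕ)) 1 k, Nat.mod_eq_of_lt s.isLt]
    rcases Nat.lt_or_ge ((s : ℕ) + 1) k with h' | h'
    · rw [hval, Nat.mod_eq_of_lt h']
    · have : (s : ℕ) + 1 = k := by omega
      rw [hval, this, Nat.mod_self, ← hvk]
  have hM'eq : (L * Tᴴ) * (T * R) = (Kᴴ * K).submatrix (Equiv.addRight (1 : Fin k)) id := by
    ext s t
    have h1 : ∀ c : Fin d, (L * Tᴴ) s c = star (T c (v ((s : ℕ) + 1))) := by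
      intro c
      simp only [Matrix.mul_apply, hL, Matrix.of_apply, Matrix.conjTranspose_apply]
      rw [Finset.sum_eq_single (v ((s : ℕ) + 1))]
      · simp
      · intro j _ hj; simp [hj]
      · simp
    have h2 : ∀ c : Fin d, (T * R) c t = T c (v (t : ℕ)) := by
      intro c
      simp only [Matrix.mul_apply, hR, Matrix.of_apply]
      rw [Finset.sum_eq_single (v (t : ℕ))]
      · simp
      · intro j _ hj; simp [hj]
      · simp
    simp only [Matrix.mul_apply, h1, h2, Matrix.submatrix_apply, id,
      Matrix.conjTranspose_apply, hK, Matrix.of_apply, Equiv.coe_addRight]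
    refine Finset.sum_congr rfl fun c _ => ?_
    rw [key s]
  rw [hM'eq] at hN
  -- nilpotent implies zero determinant, contradiction
  obtain ⟨m, hm⟩ := hN
  have hdet0 : ((Kᴴ * K).submatrix (Equiv.addRight (1 : Fin k)) id).det = 0 := by
    haveI : Nonempty (Fin k) := ⟨⟨0, hk⟩⟩
    rcases Nat.eq_zero_or_pos m with hm0 | hm0
    · subst hm0
      rw [pow_zero] at hm
      have := congrArg Matrix.det hm
      rw [Matrix.det_one, Matrix.det_zero] at this
      exact absurd this one_ne_zero
    · have := congrArg Matrix.det hm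
      rw [Matrix.det_pow, Matrix.det_zero] at this
      exact pow_eq_zero_iff hm0.ne' |>.mp this
  rw [Matrix.det_permute] at hdet0
  have hsign : ((Equiv.Perm.sign (Equiv.addRight (1 : Fin k)) : ℤ) : ℂ) ≠ 0 := by
    rcases Int.units_eq_one_or (Equiv.Perm.sign (Equiv.addRight (1 : Fin k))) with h' | h' <;>
      rw [h'] <;> norm_num
  exact hdetA (by
    rcases mul_eq_zero.mp hdet0 with h' | h'
    · exact absurd h' hsign
    · exact h')

/-- The maximum number of vertices of an acyclic induced subgraph of `G` equals the
largest dimension `d` of a subspace `U ≤ ℂ^n` such that the induced matrix space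
`S_G[U] = { T_U B T_U* : B ∈ S_G }` is nil; such a `U` of dimension `d` is encoded
by a `d × n` matrix `T` with orthonormal rows (`T * Tᴴ = 1`) spanning `U`. -/
theorem stmt_10 (n : ℕ) (E : Finset (Fin n × Fin n)) :
    sSup {k : ℕ | ∃ V : Finset (Fin n), ¬ HasCycleIn E V ∧ V.card = k} =
      sSup {d : ℕ | ∃ T : Matrix (Fin d) (Fin n) ℂ, T * Tᴴ = 1 ∧
        ∀ B ∈ graphSpace ℂ E, IsNilpotent (T * B * Tᴴ)} := by
  congr 1
  ext m
  constructor
  · rintro ⟨V, h1, h2⟩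
    exact left_to_right E V h1 h2
  · rintro ⟨T, h1, h2⟩
    exact right_to_left E T h1 h2
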